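/- Fix a dimension n, a constant c > 0 and positive weights γ : Fin n → ℝ (γᵢ > 0 for all i). Define δ : ℝⁿ → ℝ by δ(ξ) = (π/c)·√(Σᵢ γᵢ ξᵢ²) and g : ℝⁿ → ℝ by g(ξ) = 1 + cos(δ(ξ)) if δ(ξ) ≤ π and g(ξ) = 0 otherwise. Let S be a finite set of viewpoints v ∈ ℝⁿ with associated information values I_v ∈ ℝ, define η(x) = Σ_{v∈S} g(v − x), β(x) = Σ_{v∈S} I_v · g(v − x), and the approximate mutual information Ĩ(x) = β(x)/η(x). Then Ĩ is differentiable at every point x of the open set {x ∈ ℝⁿ : η(x) > 0}. -/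

import Mathlib

open Real Asymptotics Filter

lemma one_sub_cos_le_half_sq' (t : ℝ) : 1 - Real.cos t ≤ t ^ 2 / 2 := by
  have h1 := Real.sin_sq_add_cos_sq (t / 2)
  have h2 := Real.cos_sq (t / 2)
  have h3 := Real.abs_sin_le_abs (x := t / 2)
  have h4 : Real.sin (t/2) ^ 2 ≤ (t/2) ^ 2 := by
    nlinarith [sq_abs (Real.sin (t/2)), sq_abs (t/2), abs_nonneg (Real.sin (t/2)), abs_nonneg (t/2)]
  have h5 : 2 * (t/2) = t := by ring
  rw [h5] at h2
  nlinarith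

/-- If `|g ξ - g a| ≤ (φ ξ)²/2` near `a` and `φ = O(ξ - a)`, then `g` has derivative `0` at `a`. -/
lemma sq_bound_hasFDerivAt {E : Type*} [NormedAddCommGroup E] [NormedSpace ℝ E]
    (φ g : E → ℝ) (a : E)
    (hφ : (fun ξ => φ ξ) =O[nhds a] fun ξ => ξ - a)
    (hbound : ∀ ξ, |g ξ - g a| ≤ (φ ξ) ^ 2 / 2) :
    HasFDerivAt g (0 : E →L[ℝ] ℝ) a := by
  rw [hasFDerivAt_iff_isLittleO]
  simp only [ContinuousLinearMap.zero_apply, sub_zero]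
  have hsub : Tendsto (fun ξ : E => ξ - a) (nhds a) (nhds 0) := by
    exact (continuous_id.sub continuous_const).tendsto' a 0 (sub_self a)
  have hφ0 : Tendsto φ (nhds a) (nhds 0) := hφ.trans_tendsto hsub
  have hφo1 : φ =o[nhds a] (fun _ => (1 : ℝ)) := (isLittleO_one_iff ℝ).mpr hφ0
  have hφ' : φ =O[nhds a] fun ξ => ‖ξ - a‖ := hφ.norm_right
  have hmul : (fun ξ => φ ξ * φ ξ) =o[nhds a] fun ξ => (1 : ℝ) * ‖ξ - a‖ :=
    hφo1.mul_isBigO hφ'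
  have hsq : (fun ξ => (φ ξ) ^ 2) =o[nhds a] fun ξ => ξ - a := by
    have := hmul.congr (fun ξ => (sq (φ ξ)).symm) (fun ξ => one_mul _)
    exact this.of_norm_right
  have hO : (fun ξ => g ξ - g a) =O[nhds a] fun ξ => (φ ξ) ^ 2 := by
    apply IsBigO.of_bound (1/2)
    filter_upwards with ξ
    rw [Real.norm_eq_abs, Real.norm_eq_abs, abs_of_nonneg (sq_nonneg (φ ξ))]
    linarith [hbound ξ]
  exact hO.trans_isLittleO hsq

/-- The approximate mutual information `Iapprox(x) = β(x)/η(x)`, with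
`η(x) = ∑_{v∈S} g(v − x)` and `β(x) = ∑_{v∈S} I_v · g(v − x)` built from the
cutoff-cosine kernel `g`, is differentiable at every point of the set `{x : η(x) > 0}`. -/
theorem approxSMI_differentiable
    (n : ℕ) (c : ℝ) (hc : 0 < c)
    (γ : Fin n → ℝ) (hγ : ∀ i, 0 < γ i)
    (δ : EuclideanSpace ℝ (Fin n) → ℝ)
    (hδ : ∀ ξ, δ ξ = (π / c) * Real.sqrt (∑ i, γ i * ξ i ^ 2))
    (g : EuclideanSpace ℝ (Fin n) → ℝ)
    (hg : ∀ ξ, g ξ = if δ ξ ≤ π then 1 + Real.cos (δ ξ) else 0)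
    (S : Finset (EuclideanSpace ℝ (Fin n)))
    (I : EuclideanSpace ℝ (Fin n) → ℝ)
    (η β Iapprox : EuclideanSpace ℝ (Fin n) → ℝ)
    (hη : ∀ x, η x = ∑ v ∈ S, g (v - x))
    (hβ : ∀ x, β x = ∑ v ∈ S, I v * g (v - x))
    (hIapprox : ∀ x, Iapprox x = β x / η x) :
    ∀ x : EuclideanSpace ℝ (Fin n), 0 < η x → DifferentiableAt ℝ Iapprox x := by
  have hπc : 0 < π / c := div_pos Real.pi_pos hc
  set q : EuclideanSpace ℝ (Fin n) → ℝ := fun ξ => ∑ i, γ i * ξ i ^ 2 with hq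
  have hq_nonneg : ∀ ξ, 0 ≤ q ξ := fun ξ =>
    Finset.sum_nonneg fun i _ => mul_nonneg (hγ i).le (sq_nonneg _)
  have hq_diff : Differentiable ℝ q := by
    apply Differentiable.fun_sum
    intro i _
    exact (differentiable_const _).mul
      (((EuclideanSpace.proj i : EuclideanSpace ℝ (Fin n) →L[ℝ] ℝ).differentiable).pow 2)
  have hδ_sq : ∀ ξ, δ ξ ^ 2 = (π / c) ^ 2 * q ξ := by
    intro ξ
    rw [hδ, mul_pow, Real.sq_sqrt (hq_nonneg ξ)]
  have hδ_nonneg : ∀ ξ, 0 ≤ δ ξ := fun ξ => by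
    rw [hδ]; exact mul_nonneg hπc.le (Real.sqrt_nonneg _)
  have hδ_cont : Continuous δ := by
    have : Continuous fun ξ => (π / c) * Real.sqrt (q ξ) :=
      continuous_const.mul (Real.continuous_sqrt.comp hq_diff.continuous)
    exact this.congr fun ξ => (hδ ξ).symm
  have hg_nonneg : ∀ ξ, 0 ≤ g ξ := by
    intro ξ; rw [hg]
    split
    · nlinarith [Real.neg_one_le_cos (δ ξ)]
    · exact le_refl 0
  have hnorm_sq : ∀ y : EuclideanSpace ℝ (Fin n), ‖y‖ ^ 2 = ∑ i, y i ^ 2 := by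
    intro y
    rw [EuclideanSpace.norm_eq, Real.sq_sqrt (Finset.sum_nonneg fun i _ => sq_nonneg _)]
    exact Finset.sum_congr rfl fun i _ => by rw [Real.norm_eq_abs, sq_abs]
  have hcomp : ∀ (y : EuclideanSpace ℝ (Fin n)) (i : Fin n), y i ^ 2 ≤ ‖y‖ ^ 2 := by
    intro y i
    rw [hnorm_sq]
    exact Finset.single_le_sum (fun j _ => sq_nonneg (y j)) (Finset.mem_univ i)
  have hg_diff : ∀ a, DifferentiableAt ℝ g a := by
    intro a
    rcases eq_or_lt_of_le (hq_nonneg a) with hqa | hqa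
    · -- q a = 0
      have hai : ∀ i, a i = 0 := by
        intro i
        have h := (Finset.sum_eq_zero_iff_of_nonneg
          (fun i _ => mul_nonneg (hγ i).le (sq_nonneg (a i)))).mp hqa.symm i (Finset.mem_univ i)
        rcases mul_eq_zero.mp h with h | h
        · exact absurd h (hγ i).ne'
        · exact pow_eq_zero_iff two_ne_zero |>.mp h
      have hqa0 : (∑ i, γ i * a i ^ 2) = 0 := hqa.symm
      have hδa : δ a = 0 := by rw [hδ, hqa0, Real.sqrt_zero, mul_zero]
      have hga : g a = 2 := by
        rw [hg, hδa, if_pos Real.pi_nonneg, Real.cos_zero]; norm_num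
      have hbound : ∀ ξ, |g ξ - g a| ≤ (δ ξ) ^ 2 / 2 := by
        intro ξ
        rw [hga, hg]
        split
        · next h =>
          have h1 : 1 + Real.cos (δ ξ) - 2 = -(1 - Real.cos (δ ξ)) := by ring
          rw [h1, abs_neg, abs_of_nonneg (by linarith [Real.cos_le_one (δ ξ)])]
          exact one_sub_cos_le_half_sq' (δ ξ)
        · next h =>
          have h2 : π ≤ δ ξ := (not_le.mp h).le
          have h3 : π ^ 2 ≤ δ ξ ^ 2 := pow_le_pow_left₀ Real.pi_nonneg h2 2
          have h4 := Real.pi_gt_three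
          rw [zero_sub, abs_neg, abs_two]
          nlinarith
      have hO : (fun ξ => δ ξ) =O[nhds a] fun ξ => ξ - a := by
        apply IsBigO.of_bound (Real.sqrt ((π / c) ^ 2 * (∑ i, γ i)))
        filter_upwards with ξ
        have hqb : q ξ ≤ (∑ i, γ i) * ‖ξ - a‖ ^ 2 := by
          rw [Finset.sum_mul]
          apply Finset.sum_le_sum
          intro i _
          have hxi : ξ i = (ξ - a) i := by simp [hai i]
          rw [hxi]
          exact mul_le_mul_of_nonneg_left (hcomp (ξ - a) i) (hγ i).le
        have h5 : δ ξ ^ 2 ≤ ((π / c) ^ 2 * (∑ i, γ i)) * ‖ξ - a‖ ^ 2 := by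
          rw [hδ_sq]
          calc (π / c) ^ 2 * q ξ ≤ (π / c) ^ 2 * ((∑ i, γ i) * ‖ξ - a‖ ^ 2) :=
                mul_le_mul_of_nonneg_left hqb (sq_nonneg _)
            _ = ((π / c) ^ 2 * (∑ i, γ i)) * ‖ξ - a‖ ^ 2 := by ring
        have h6 : δ ξ ≤ Real.sqrt ((π / c) ^ 2 * (∑ i, γ i)) * ‖ξ - a‖ := by
          have := Real.sqrt_le_sqrt h5
          rw [Real.sqrt_sq (hδ_nonneg ξ)] at this
          calc δ ξ ≤ Real.sqrt (((π / c) ^ 2 * (∑ i, γ i)) * ‖ξ - a‖ ^ 2) := this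
            _ = Real.sqrt ((π / c) ^ 2 * (∑ i, γ i)) * ‖ξ - a‖ := by
                rw [Real.sqrt_mul (mul_nonneg (sq_nonneg _) (Finset.sum_nonneg fun i _ => (hγ i).le)), Real.sqrt_sq (norm_nonneg _)]
        rw [Real.norm_eq_abs, abs_of_nonneg (hδ_nonneg ξ)]
        exact h6
      exact (sq_bound_hasFDerivAt δ g a hO hbound).differentiableAt
    · -- q a > 0
      have hδ_diffa : DifferentiableAt ℝ δ a := by
        have h1 : DifferentiableAt ℝ (fun ξ => (π / c) * Real.sqrt (q ξ)) a :=
          (differentiableAt_const _).mul ((hq_diff a).sqrt hqa.ne')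
        have h2 : δ = fun ξ => (π / c) * Real.sqrt (q ξ) := funext hδ
        rw [h2]
        exact h1
      rcases lt_trichotomy (δ a) π with hlt | heq | hgt
      · have hev : ∀ᶠ ξ in nhds a, δ ξ < π :=
          hδ_cont.continuousAt.eventually_lt continuousAt_const hlt
        have h2 : DifferentiableAt ℝ (fun ξ => 1 + Real.cos (δ ξ)) a :=
          (differentiableAt_const _).add hδ_diffa.cos
        apply h2.congr_of_eventuallyEq
        filter_upwards [hev] with ξ hξ
        rw [hg, if_pos hξ.le]
      · have hga : g a = 0 := by rw [hg, heq, if_pos le_rfl, Real.cos_pi]; ring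
        have hbound : ∀ ξ, |g ξ - g a| ≤ (δ ξ - δ a) ^ 2 / 2 := by
          intro ξ
          rw [hga, sub_zero, hg, heq]
          split
          · next h =>
            rw [abs_of_nonneg (by nlinarith [Real.neg_one_le_cos (δ ξ)])]
            have h1 : 1 + Real.cos (δ ξ) = 1 - Real.cos (δ ξ - π) := by
              rw [Real.cos_sub_pi]; ring
            rw [h1]
            exact one_sub_cos_le_half_sq' (δ ξ - π)
          · next h => rw [abs_zero]; positivity
        have hO : (fun ξ => δ ξ - δ a) =O[nhds a] fun ξ => ξ - a := hδ_diffa.isBigO_sub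
        exact (sq_bound_hasFDerivAt _ g a hO hbound).differentiableAt
      · have hev : ∀ᶠ ξ in nhds a, π < δ ξ :=
          continuousAt_const.eventually_lt hδ_cont.continuousAt hgt
        apply (differentiableAt_const (0 : ℝ)).congr_of_eventuallyEq
        filter_upwards [hev] with ξ hξ
        rw [hg, if_neg (not_le.mpr hξ)]
  have hη_diff : ∀ x, DifferentiableAt ℝ η x := by
    intro x
    have h1 : DifferentiableAt ℝ (fun x => ∑ v ∈ S, g (v - x)) x := by
      apply DifferentiableAt.fun_sum
      intro v _
      exact (hg_diff (v - x)).comp x ((differentiableAt_const v).sub differentiableAt_id)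
    exact h1.congr_of_eventuallyEq (Filter.Eventually.of_forall hη)
  have hβ_diff : ∀ x, DifferentiableAt ℝ β x := by
    intro x
    have h1 : DifferentiableAt ℝ (fun x => ∑ v ∈ S, I v * g (v - x)) x := by
      apply DifferentiableAt.fun_sum
      intro v _
      exact (differentiableAt_const (I v)).mul
        ((hg_diff (v - x)).comp x ((differentiableAt_const v).sub differentiableAt_id))
    exact h1.congr_of_eventuallyEq (Filter.Eventually.of_forall hβ)
  intro x hx
  have h1 : DifferentiableAt ℝ (fun y => β y / η y) x := by
    simp only [div_eq_mul_inv]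
    exact (hβ_diff x).mul ((hη_diff x).inv hx.ne')
  exact h1.congr_of_eventuallyEq (Filter.Eventually.of_forall hIapprox)
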